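/- arXiv:2505.20353 — 2 statements merged into one kernel-verified Lean document; each statement's English description precedes it below -/
import Mathlib

section
/- Let N be a positive integer and let v : ℝ^N → ℝ (with the Euclidean norm on ℝ^N) be twice continuously differentiable, with the operator norm of its second Fréchet derivative bounded by a constant C ≥ 0 at every point. Fix b, x ∈ ℝ^N with ‖x − b‖ ≤ δ. For each coordinate i, define the singleton interaction I(i) = v(update of b at coordinate i to x_i) − v(b). Then |v(x) − v(b) − Σ_{i=1}^N I(i)| ≤ C·δ². -/
open scoped BigOperators

/-- Second-order Taylor bound with the 1/2 factor. -/
lemma fastcache_taylor_half {E : Type*} [NormedAddCommGroup E] [NormedSpace ℝ E]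
    (f : E → ℝ) (C : ℝ) (hf : ContDiff ℝ 2 f)
    (hC2 : ∀ z : E, ‖iteratedFDeriv ℝ 2 f z‖ ≤ C) (a u : E) :
    |f (a + u) - f a - fderiv ℝ f a u| ≤ C / 2 * ‖u‖ ^ 2 := by
  have hdiff : Differentiable ℝ f := hf.differentiable (by norm_num)
  have hf1 : ContDiff ℝ 1 (fderiv ℝ f) := hf.fderiv_right (by norm_num)
  -- Lipschitz bound on the derivative
  have hlip : ∀ y z : E, ‖fderiv ℝ f y - fderiv ℝ f z‖ ≤ C * ‖y - z‖ := by
    intro y z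
    refine Convex.norm_image_sub_le_of_norm_fderiv_le
      (fun w _ => (hf1.differentiable (by norm_num)).differentiableAt) (fun w _ => ?_)
      convex_univ (Set.mem_univ z) (Set.mem_univ y)
    calc ‖fderiv ℝ (fderiv ℝ f) w‖
        = ‖iteratedFDeriv ℝ 0 (fderiv ℝ (fderiv ℝ f)) w‖ := by rw [norm_iteratedFDeriv_zero]
      _ = ‖iteratedFDeriv ℝ 1 (fderiv ℝ f) w‖ := norm_iteratedFDeriv_fderiv
      _ = ‖iteratedFDeriv ℝ 2 f w‖ := norm_iteratedFDeriv_fderiv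
      _ ≤ C := hC2 w
  set g : ℝ → ℝ := fun t => f (a + t • u) - f a - t * fderiv ℝ f a u with hg
  have hg' : ∀ t : ℝ, HasDerivAt g (fderiv ℝ f (a + t • u) u - fderiv ℝ f a u) t := by
    intro t
    have h1 : HasDerivAt (fun t : ℝ => a + t • u) u t := by
      simpa using ((hasDerivAt_id t).smul_const u).const_add a
    have h2 : HasDerivAt (fun t : ℝ => f (a + t • u)) (fderiv ℝ f (a + t • u) u) t :=
      (hdiff (a + t • u)).hasFDerivAt.comp_hasDerivAt t h1
    exact ((h2.sub_const (f a)).sub ((hasDerivAt_id' t).mul_const (fderiv ℝ f a u))).congr_deriv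
      (by simp)
  have key : ∀ s ∈ Set.Icc (0:ℝ) 1, ‖g s‖ ≤ C * ‖u‖ ^ 2 / 2 * s ^ 2 := by
    refine image_norm_le_of_norm_deriv_right_le_deriv_boundary
      (f := g) (f' := fun t => fderiv ℝ f (a + t • u) u - fderiv ℝ f a u)
      (B := fun t => C * ‖u‖ ^ 2 / 2 * t ^ 2) (B' := fun t => C * ‖u‖ ^ 2 * t)
      (fun t _ => (hg' t).continuousAt.continuousWithinAt)
      (fun t _ => (hg' t).hasDerivWithinAt) (by simp [hg]) (fun t => ?_) ?_
    · have := (hasDerivAt_pow 2 t).const_mul (C * ‖u‖ ^ 2 / 2)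
      refine this.congr_deriv ?_
      rw [Nat.cast_ofNat, show (2:ℕ) - 1 = 1 from rfl, pow_one]; ring
    · intro t ht
      have h1 : ‖(fderiv ℝ f (a + t • u) - fderiv ℝ f a) u‖
          ≤ ‖fderiv ℝ f (a + t • u) - fderiv ℝ f a‖ * ‖u‖ :=
        (fderiv ℝ f (a + t • u) - fderiv ℝ f a).le_opNorm u
      have h2 : ‖fderiv ℝ f (a + t • u) - fderiv ℝ f a‖ ≤ C * (t * ‖u‖) := by
        have := hlip (a + t • u) a
        simpa [norm_smul, abs_of_nonneg ht.1] using this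
      calc ‖fderiv ℝ f (a + t • u) u - fderiv ℝ f a u‖
          = ‖(fderiv ℝ f (a + t • u) - fderiv ℝ f a) u‖ := by
            simp [ContinuousLinearMap.sub_apply]
        _ ≤ ‖fderiv ℝ f (a + t • u) - fderiv ℝ f a‖ * ‖u‖ := h1
        _ ≤ C * (t * ‖u‖) * ‖u‖ := by
            exact mul_le_mul_of_nonneg_right h2 (norm_nonneg u)
        _ = C * ‖u‖ ^ 2 * t := by ring
  have h1 := key 1 (by norm_num)
  have h2 : |f (a + u) - f a - fderiv ℝ f a u| ≤ C * ‖u‖ ^ 2 / 2 := by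
    simpa [hg, Real.norm_eq_abs] using h1
  rw [show C / 2 * ‖u‖ ^ 2 = C * ‖u‖ ^ 2 / 2 by ring]
  exact h2

/-- First-order interaction recovery: the first-order Taylor approximation of `v` at the
cached background `b` recovers the sum of singleton Harsanyi interactions up to `O(δ²)`. -/
theorem fastcache_first_order_interaction_recovery
    (N : ℕ) (hN : 0 < N)
    (v : EuclideanSpace ℝ (Fin N) → ℝ) (C δ : ℝ) (hC : 0 ≤ C)
    (hv : ContDiff ℝ 2 v)
    (hC2 : ∀ z : EuclideanSpace ℝ (Fin N), ‖iteratedFDeriv ℝ 2 v z‖ ≤ C)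
    (b x : EuclideanSpace ℝ (Fin N)) (hδ : ‖x - b‖ ≤ δ)
    (I : Fin N → ℝ) (hI : ∀ i, I i = v (WithLp.toLp 2 (Function.update b i (x i))) - v b) :
    |v x - v b - ∑ i, I i| ≤ C * δ ^ 2 := by
  have hδ0 : (0:ℝ) ≤ δ := le_trans (norm_nonneg _) hδ
  set D := fderiv ℝ v b with hD
  set u : Fin N → EuclideanSpace ℝ (Fin N) :=
    fun i => EuclideanSpace.single i (x i - b i) with hu
  have hupd : ∀ i, WithLp.toLp 2 (Function.update b i (x i)) = b + u i := by
    intro i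
    ext j
    by_cases h : j = i
    · subst h; simp [hu, Function.update_self, EuclideanSpace.single_apply]
    · simp [hu, Function.update_of_ne h, EuclideanSpace.single_apply, h]
  have hsum : ∑ i, u i = x - b := by
    ext j
    simp [hu, EuclideanSpace.single_apply]
  -- Taylor bounds
  have h0 : |v x - v b - D (x - b)| ≤ C / 2 * ‖x - b‖ ^ 2 := by
    have := fastcache_taylor_half v C hv hC2 b (x - b)
    simpa [hD] using this
  have hi : ∀ i, |v (WithLp.toLp 2 (Function.update b i (x i))) - v b - D (u i)|
      ≤ C / 2 * (x i - b i) ^ 2 := by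
    intro i
    have := fastcache_taylor_half v C hv hC2 b (u i)
    rw [hupd i]
    simpa [hu, hD, EuclideanSpace.norm_single, sq_abs] using this
  -- decomposition
  have hdecomp : v x - v b - ∑ i, I i
      = (v x - v b - D (x - b)) - ∑ i, (v (WithLp.toLp 2 (Function.update b i (x i))) - v b - D (u i)) := by
    have hDsum : D (x - b) = ∑ i, D (u i) := by rw [← hsum, map_sum]
    rw [hDsum, Finset.sum_sub_distrib]
    try simp [hI, Finset.sum_sub_distrib]
  have hnormsq : ∑ i, (x i - b i) ^ 2 = ‖x - b‖ ^ 2 := by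
    rw [EuclideanSpace.norm_eq, Real.sq_sqrt (by positivity)]
    refine Finset.sum_congr rfl fun i _ => ?_
    simp [sq_abs]
  calc |v x - v b - ∑ i, I i|
      ≤ |v x - v b - D (x - b)|
        + |∑ i, (v (WithLp.toLp 2 (Function.update b i (x i))) - v b - D (u i))| := by
          rw [hdecomp]; exact abs_sub _ _
    _ ≤ C / 2 * ‖x - b‖ ^ 2 + ∑ i, C / 2 * (x i - b i) ^ 2 := by
        refine add_le_add h0 ?_
        exact le_trans (Finset.abs_sum_le_sum_abs _ _) (Finset.sum_le_sum fun i _ => hi i)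
    _ = C * ‖x - b‖ ^ 2 := by
        rw [← Finset.mul_sum, hnormsq]; ring
    _ ≤ C * δ ^ 2 := by
        have : ‖x - b‖ ^ 2 ≤ δ ^ 2 := pow_le_pow_left₀ (norm_nonneg _) hδ 2
        exact mul_le_mul_of_nonneg_left this hC
end

section
/- Let N be a finite type with n = |N| elements and w : Finset N → ℝ. For each S ⊆ N define the Harsanyi interaction I(S) = Σ_{T ⊆ S} (−1)^{|S| − |T|} · (w(T) − w(∅)). Suppose |I(S)| ≤ ε for every subset S with |S| ≥ 2. Then |w(N) − w(∅) − Σ_{i ∈ N} I({i})| ≤ (2^n − n − 1)·ε, where the sum is over all singleton interactions. -/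
open scoped BigOperators

open Finset in
lemma fastcache_interval_sum {N : Type*} [DecidableEq N] (S U : Finset N) (hU : U ⊆ S) :
    ∑ T ∈ S.powerset.filter (fun T => U ⊆ T), (-1 : ℝ) ^ (T.card - U.card)
      = if U = S then 1 else 0 := by
  have key : ∑ V ∈ (S \ U).powerset, (-1 : ℝ) ^ V.card = if S \ U = ∅ then 1 else 0 := by
    have := @Finset.sum_powerset_neg_one_pow_card N _ (S \ U)
    exact_mod_cast congrArg (fun z : ℤ => (z : ℝ)) this
  rw [Finset.sum_bij' (fun V (_ : V ∈ (S \ U).powerset) => V ∪ U)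
      (fun T (_ : T ∈ S.powerset.filter (fun T => U ⊆ T)) => T \ U) ?_ ?_ ?_ ?_ ?_] at key
  · rw [key]
    have : S \ U = ∅ ↔ U = S := by
      rw [Finset.sdiff_eq_empty_iff_subset]
      exact ⟨fun h => Finset.Subset.antisymm hU h, fun h => h ▸ Finset.Subset.refl _⟩
    by_cases h : U = S <;> simp [h, this]
  · intro V hV
    simp only [mem_powerset] at hV
    simp only [mem_filter, mem_powerset]
    exact ⟨union_subset (hV.trans sdiff_subset) hU, subset_union_right⟩
  · intro T hT
    simp only [mem_filter, mem_powerset] at hT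
    exact mem_powerset.2 (sdiff_subset_sdiff hT.1 (Subset.refl U))
  · intro V hV
    simp only [mem_powerset] at hV
    have : Disjoint V U := disjoint_of_subset_left hV sdiff_disjoint
    exact union_sdiff_cancel_right this
  · intro T hT
    simp only [mem_filter, mem_powerset] at hT
    exact sdiff_union_of_subset hT.2
  · intro V hV
    simp only [mem_powerset] at hV
    have hdis : Disjoint V U := disjoint_of_subset_left hV sdiff_disjoint
    congr 1
    rw [card_union_of_disjoint hdis]
    omega

open Finset in
lemma fastcache_inversion {N : Type*} [DecidableEq N] (f : Finset N → ℝ) (S : Finset N) :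
    ∑ T ∈ S.powerset, ∑ U ∈ T.powerset, (-1 : ℝ) ^ (T.card - U.card) * f U = f S := by
  rw [Finset.sum_comm' (t' := S.powerset)
      (s' := fun U => S.powerset.filter (fun T => U ⊆ T))
      (fun T U => by
        simp only [mem_powerset, mem_filter]
        constructor
        · rintro ⟨h1, h2⟩; exact ⟨⟨h1, h2⟩, h2.trans h1⟩
        · rintro ⟨⟨h1, h2⟩, _⟩; exact ⟨h1, h2⟩)]
  have : ∀ U ∈ S.powerset,
      ∑ T ∈ S.powerset.filter (fun T => U ⊆ T), (-1 : ℝ) ^ (T.card - U.card) * f U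
        = (if U = S then 1 else 0) * f U := by
    intro U hU
    rw [← Finset.sum_mul, fastcache_interval_sum S U (mem_powerset.1 hU)]
  rw [Finset.sum_congr rfl this]
  simp

open Finset in
/-- Under Assumption A1 (all interactions of order ≥ 2 bounded by ε), the full score
`w(N)` is approximated by the baseline score plus the sum of singleton interactions,
with error at most `(2^n − n − 1)·ε`. -/
theorem fastcache_low_interaction_singleton_approximation
    {N : Type*} [Fintype N] [DecidableEq N]
    (n : ℕ) (hn : n = Fintype.card N)
    (w : Finset N → ℝ) (I : Finset N → ℝ)
    (hI : ∀ S : Finset N,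
      I S = ∑ T ∈ S.powerset, (-1 : ℝ) ^ (S.card - T.card) * (w T - w ∅))
    (ε : ℝ) (hε : ∀ S : Finset N, 2 ≤ S.card → |I S| ≤ ε) :
    |w Finset.univ - w ∅ - ∑ i : N, I {i}| ≤ ((2 : ℝ) ^ n - n - 1) * ε := by
  classical
  have hinv : ∑ T ∈ (univ : Finset N).powerset, I T = w univ - w ∅ := by
    rw [Finset.sum_congr rfl (fun T _ => hI T)]
    exact fastcache_inversion (fun U => w U - w ∅) univ
  have hset : (univ : Finset N).powerset.filter (fun T => T.card ≤ 1)
      = insert ∅ ((univ : Finset N).image fun i => {i}) := by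
    ext T
    simp only [mem_filter, mem_powerset, mem_insert, mem_image, mem_univ, true_and,
      subset_univ, true_and]
    constructor
    · intro h
      interval_cases h' : T.card
      · exact Or.inl (card_eq_zero.1 h')
      · obtain ⟨i, hi⟩ := card_eq_one.1 h'
        exact Or.inr ⟨i, hi.symm⟩
    · rintro (rfl | ⟨i, rfl⟩) <;> simp
  have hI0 : I ∅ = 0 := by rw [hI]; simp
  have hlow : ∑ T ∈ (univ : Finset N).powerset.filter (fun T => T.card ≤ 1), I T
      = ∑ i : N, I {i} := by
    rw [hset, Finset.sum_insert (by simp), hI0, zero_add,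
      Finset.sum_image (fun a _ b _ h => Finset.singleton_injective h)]
  have hsplit := Finset.sum_filter_add_sum_filter_not
    (univ : Finset N).powerset (fun T => T.card ≤ 1) I
  have hEq : w univ - w ∅ - ∑ i : N, I {i}
      = ∑ T ∈ (univ : Finset N).powerset.filter (fun T => ¬ T.card ≤ 1), I T := by
    rw [← hinv, ← hsplit, hlow]; ring
  have hcardN : n + 1 ≤ 2 ^ n := Nat.lt_two_pow_self
  have hcard : ((univ : Finset N).powerset.filter (fun T => ¬ T.card ≤ 1)).card
      = 2 ^ n - (n + 1) := by
    have h1 := Finset.card_filter_add_card_filter_not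
      (s := (univ : Finset N).powerset) (p := fun T => T.card ≤ 1)
    have h2 : ((univ : Finset N).powerset.filter (fun T => T.card ≤ 1)).card = n + 1 := by
      rw [hset, Finset.card_insert_of_notMem (by simp),
        Finset.card_image_of_injective _ Finset.singleton_injective]
      simp [hn, add_comm]
    have h3 : ((univ : Finset N).powerset).card = 2 ^ n := by
      rw [Finset.card_powerset, Finset.card_univ, hn]
    omega
  rw [hEq]
  calc |∑ T ∈ (univ : Finset N).powerset.filter (fun T => ¬ T.card ≤ 1), I T|
      ≤ ∑ T ∈ (univ : Finset N).powerset.filter (fun T => ¬ T.card ≤ 1), |I T| :=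
        Finset.abs_sum_le_sum_abs _ _
    _ ≤ ∑ T ∈ (univ : Finset N).powerset.filter (fun T => ¬ T.card ≤ 1), ε := by
        refine Finset.sum_le_sum fun T hT => hε T ?_
        simp only [mem_filter] at hT
        omega
    _ = ((2 : ℝ) ^ n - n - 1) * ε := by
        rw [Finset.sum_const, hcard, nsmul_eq_mul]
        congr 1
        push_cast [Nat.cast_sub hcardN]
        ring
end
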